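/- Sliced splitting identity for Laplace exponents: if Φ is the Laplace exponent of a subordinator with Lévy measure ν̃ (and zero drift), then the interrupted subordinator at rate θ > 0 has Laplace exponent Φ_θ(ρ) = (ρ/(ρ+θ)) Φ(ρ+θ), and its Lévy measure satisfies ν̃_θ[y,∞] = e^{−θy} ν̃[y,∞]; moreover these two statements are consistent: the Laplace exponent of the measure with tail e^{−θy} ν̃[y,∞] equals (ρ/(ρ+θ))Φ(ρ+θ). -/

import Mathlib

open MeasureTheory Set

lemma int_c_exp (c y : ℝ) :
    ∫ t in (0:ℝ)..y, c * Real.exp (-c * t) = 1 - Real.exp (-c * y) := by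
  have h : ∀ t ∈ Set.uIcc (0:ℝ) y,
      HasDerivAt (fun s => -Real.exp (-c * s)) (c * Real.exp (-c * t)) t := by
    intro t _
    have h1 : HasDerivAt (fun s : ℝ => -c * s) (-c) t := by
      simpa using (hasDerivAt_id t).const_mul (-c)
    have h2 : HasDerivAt (fun s => -Real.exp (-c * s)) (-(Real.exp (-c * t) * -c)) t := (h1.exp).neg
    convert h2 using 1
    ring
  have hcont : IntervalIntegrable (fun t => c * Real.exp (-c * t)) MeasureTheory.volume 0 y :=
    (Continuous.intervalIntegrable (by continuity) 0 y)
  have := intervalIntegral.integral_eq_sub_of_hasDerivAt h hcont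
  rw [this]
  simp [Real.exp_zero]
  ring

lemma tail_lintegral (m : Measure ℝ) (c : ℝ) (hc : 0 < c) :
    ∫⁻ y in Set.Ioi (0:ℝ), ENNReal.ofReal (1 - Real.exp (-c * y)) ∂m
      = ∫⁻ t in Set.Ioi (0:ℝ), m (Set.Ici t ∩ Set.Ioi 0) * ENNReal.ofReal (c * Real.exp (-c * t)) := by
  have f_nn : 0 ≤ᵐ[m.restrict (Set.Ioi 0)] (id : ℝ → ℝ) := by
    filter_upwards [ae_restrict_mem measurableSet_Ioi] with y hy
    exact le_of_lt hy
  have f_mble : AEMeasurable (id : ℝ → ℝ) (m.restrict (Set.Ioi 0)) := aemeasurable_id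
  have g_intble : ∀ t > (0:ℝ), IntervalIntegrable (fun s => c * Real.exp (-c * s))
      MeasureTheory.volume 0 t := fun t _ => (Continuous.intervalIntegrable (by continuity) 0 t)
  have g_nn : ∀ᵐ t ∂(MeasureTheory.volume.restrict (Set.Ioi (0:ℝ))),
      0 ≤ c * Real.exp (-c * t) := by
    filter_upwards with t
    positivity
  have key := lintegral_comp_eq_lintegral_meas_le_mul (m.restrict (Set.Ioi 0)) f_nn f_mble
    g_intble g_nn
  have l1 : ∫⁻ ω, ENNReal.ofReal (∫ t in (0:ℝ)..(id ω), c * Real.exp (-c * t))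
      ∂(m.restrict (Set.Ioi 0))
      = ∫⁻ y in Set.Ioi (0:ℝ), ENNReal.ofReal (1 - Real.exp (-c * y)) ∂m := by
    apply lintegral_congr
    intro y
    rw [int_c_exp]
    rfl
  rw [l1] at key
  rw [key]
  apply lintegral_congr
  intro t
  congr 1
  rw [Measure.restrict_apply (measurableSet_le measurable_const measurable_id)]
  rfl

lemma one_sub_exp_le (c y : ℝ) (hc : 0 < c) (hy : 0 ≤ y) :
    1 - Real.exp (-c * y) ≤ max c 1 * (1 - Real.exp (-y)) := by
  have hy1 : Real.exp (-y) ≤ 1 := Real.exp_le_one_iff.mpr (by linarith)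
  rcases le_total c 1 with h | h
  · have : Real.exp (-y) ≤ Real.exp (-c * y) := Real.exp_le_exp.mpr (by nlinarith)
    rw [max_eq_right h]
    linarith
  · rw [max_eq_left h]
    have e1 : 1 - Real.exp (-c * y) = ∫ t in (0:ℝ)..y, c * Real.exp (-c * t) :=
      (int_c_exp c y).symm
    have e2 : 1 - Real.exp (-y) = ∫ t in (0:ℝ)..y, Real.exp (-t) := by
      have h1 := int_c_exp 1 y
      simp only [neg_mul, one_mul] at h1
      rw [← h1]
    rw [e1, e2, ← intervalIntegral.integral_const_mul]
    apply intervalIntegral.integral_mono_on hy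
      (Continuous.intervalIntegrable (by continuity) 0 y)
      (Continuous.intervalIntegrable (by continuity) 0 y)
    intro t ht
    have : Real.exp (-c * t) ≤ Real.exp (-t) := Real.exp_le_exp.mpr (by nlinarith [ht.1])
    nlinarith [Real.exp_pos (-c*t), Real.exp_pos (-t)]

lemma nn_aux (m : Measure ℝ) (c : ℝ) (hc : 0 < c) :
    0 ≤ᵐ[m.restrict (Set.Ioi 0)] fun y => 1 - Real.exp (-c * y) := by
  filter_upwards [ae_restrict_mem measurableSet_Ioi] with y hy
  have hy' : 0 < y := hy
  have : Real.exp (-c * y) ≤ 1 := Real.exp_le_one_iff.mpr (by nlinarith)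
  simp only [Pi.zero_apply]
  linarith

theorem sliced_splitting_laplaceExponent (ν νθ : Measure ℝ) (θ ρ : ℝ)
    (hθ : 0 < θ) (hρ : 0 < ρ)
    (hsupp : ν (Set.Iic 0) = 0) (hsuppθ : νθ (Set.Iic 0) = 0)
    (hfin : ∀ y : ℝ, 0 < y → ν (Set.Ici y) ≠ ⊤)
    (htail : ∀ y : ℝ, 0 < y →
      (νθ (Set.Ici y)).toReal = Real.exp (-θ * y) * (ν (Set.Ici y)).toReal)
    (hint : IntegrableOn (fun y => 1 - Real.exp (-y)) (Set.Ioi 0) ν) :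
    ∫ y in Set.Ioi (0:ℝ), (1 - Real.exp (-ρ * y)) ∂νθ =
      ρ / (ρ + θ) * ∫ y in Set.Ioi (0:ℝ), (1 - Real.exp (-(ρ + θ) * y)) ∂ν := by
  have hσ : 0 < ρ + θ := by linarith
  have hIci : ∀ t : ℝ, t ∈ Set.Ioi (0:ℝ) → Set.Ici t ∩ Set.Ioi 0 = Set.Ici t := by
    intro t ht
    exact Set.inter_eq_left.mpr (fun y hy => Set.mem_Ioi.mpr (lt_of_lt_of_le (Set.mem_Ioi.mp ht) (Set.mem_Ici.mp hy)))
  -- integrability of the (ρ+θ) integrand w.r.t. ν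
  have hintσ : IntegrableOn (fun y => 1 - Real.exp (-(ρ + θ) * y)) (Set.Ioi 0) ν := by
    apply Integrable.mono' (hint.const_mul (max (ρ + θ) 1))
      ((Continuous.aestronglyMeasurable (by continuity)))
    filter_upwards [ae_restrict_mem measurableSet_Ioi, nn_aux ν (ρ + θ) hσ] with y hy hnn
    rw [Real.norm_eq_abs, abs_of_nonneg hnn]
    exact one_sub_exp_le (ρ + θ) y hσ (le_of_lt hy)
  set L : ENNReal := ∫⁻ y in Set.Ioi (0:ℝ), ENNReal.ofReal (1 - Real.exp (-(ρ + θ) * y)) ∂ν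
    with hLdef
  have hL : L ≠ ⊤ := by
    have := (hasFiniteIntegral_iff_ofReal (nn_aux ν (ρ + θ) hσ)).mp hintσ.hasFiniteIntegral
    exact this.ne
  by_cases hd : ∀ t : ℝ, 0 < t → νθ (Set.Ici t) ≠ ⊤
  · -- main case
    have hνθ : ∀ t : ℝ, 0 < t →
        νθ (Set.Ici t) = ENNReal.ofReal (Real.exp (-θ * t)) * ν (Set.Ici t) := by
      intro t ht
      rw [← ENNReal.ofReal_toReal (hd t ht), htail t ht,
        ENNReal.ofReal_mul (le_of_lt (Real.exp_pos _)), ENNReal.ofReal_toReal (hfin t ht)]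
    have hpt : ∀ t ∈ Set.Ioi (0:ℝ),
        νθ (Set.Ici t ∩ Set.Ioi 0) * ENNReal.ofReal (ρ * Real.exp (-ρ * t))
          = ENNReal.ofReal (ρ / (ρ + θ)) *
            (ν (Set.Ici t ∩ Set.Ioi 0) * ENNReal.ofReal ((ρ + θ) * Real.exp (-(ρ + θ) * t))) := by
      intro t ht
      have hE : Real.exp (-θ * t) * Real.exp (-ρ * t) = Real.exp (-(ρ + θ) * t) := by
        rw [← Real.exp_add]; congr 1; ring
      rw [hIci t ht, hνθ t ht]
      rw [mul_comm (ENNReal.ofReal (Real.exp (-θ * t))) (ν (Set.Ici t)), mul_assoc,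
        ← ENNReal.ofReal_mul (le_of_lt (Real.exp_pos _)),
        mul_comm (ENNReal.ofReal (ρ / (ρ + θ))), mul_assoc,
        ← ENNReal.ofReal_mul (by positivity)]
      congr 1
      rw [← hE]
      field_simp
    have hkey : ∫⁻ y in Set.Ioi (0:ℝ), ENNReal.ofReal (1 - Real.exp (-ρ * y)) ∂νθ
        = ENNReal.ofReal (ρ / (ρ + θ)) * L := by
      rw [tail_lintegral νθ ρ hρ,
        setLIntegral_congr_fun measurableSet_Ioi hpt,
        lintegral_const_mul' _ _ ENNReal.ofReal_ne_top, ← tail_lintegral ν (ρ + θ) hσ]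
    have hfinθ : ∫⁻ y in Set.Ioi (0:ℝ), ENNReal.ofReal (1 - Real.exp (-ρ * y)) ∂νθ ≠ ⊤ := by
      rw [hkey]
      exact ENNReal.mul_ne_top ENNReal.ofReal_ne_top hL
    have hcont : ∀ c : ℝ, Continuous fun y : ℝ => 1 - Real.exp (-c * y) := fun c =>
      continuous_const.sub (Real.continuous_exp.comp (continuous_const.mul continuous_id))
    rw [integral_eq_lintegral_of_nonneg_ae (nn_aux νθ ρ hρ)
        (Continuous.aestronglyMeasurable (hcont ρ)),
      integral_eq_lintegral_of_nonneg_ae (nn_aux ν (ρ + θ) hσ)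
        (Continuous.aestronglyMeasurable (hcont (ρ + θ))),
      hkey, ENNReal.toReal_mul, ENNReal.toReal_ofReal (by positivity)]
  · -- degenerate case: some tail of νθ is infinite, then ν vanishes on (0,∞)
    push_neg at hd
    obtain ⟨t0, ht0, htop⟩ := hd
    have hν0 : ∀ t : ℝ, 0 < t → ν (Set.Ici t) = 0 := by
      intro t ht
      have hm : 0 < min t t0 := lt_min ht ht0
      have hθtop : νθ (Set.Ici (min t t0)) = ⊤ := by
        rw [eq_top_iff, ← htop]
        exact measure_mono (Set.Ici_subset_Ici.mpr (min_le_right t t0))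
      have h1 := htail (min t t0) hm
      rw [hθtop, ENNReal.toReal_top] at h1
      have h2 : (ν (Set.Ici (min t t0))).toReal = 0 := by
        have := Real.exp_pos (-θ * min t t0)
        nlinarith [ENNReal.toReal_nonneg (a := ν (Set.Ici (min t t0)))]
      have h3 : ν (Set.Ici (min t t0)) = 0 := by
        rcases (ENNReal.toReal_eq_zero_iff _).mp h2 with h | h
        · exact h
        · exact absurd h (hfin _ hm)
      have : ν (Set.Ici t) ≤ ν (Set.Ici (min t t0)) :=
        measure_mono (Set.Ici_subset_Ici.mpr (min_le_left t t0))
      exact le_antisymm (h3 ▸ this) zero_le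
    have hν : ν (Set.Ioi 0) = 0 := by
      have hsub : Set.Ioi (0:ℝ) ⊆ ⋃ n : ℕ, Set.Ici (((n:ℝ) + 1)⁻¹) := by
        intro y hy
        have hy' : 0 < y := hy
        obtain ⟨n, hn⟩ := exists_nat_gt y⁻¹
        refine Set.mem_iUnion.mpr ⟨n, ?_⟩
        have hle : y⁻¹ ≤ (n:ℝ) + 1 := by linarith
        exact Set.mem_Ici.mpr (inv_le_of_inv_le₀ hy' hle)
      refine le_antisymm ((measure_mono hsub).trans ?_) zero_le
      refine (measure_iUnion_le _).trans ?_
      have : ∀ n : ℕ, ν (Set.Ici (((n:ℝ) + 1)⁻¹)) = 0 := by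
        intro n
        exact hν0 _ (by positivity)
      simp [this]
    have hrestr : ν.restrict (Set.Ioi 0) = 0 := Measure.restrict_eq_zero.mpr hν
    have hRHS : ∫ y in Set.Ioi (0:ℝ), (1 - Real.exp (-(ρ + θ) * y)) ∂ν = 0 := by
      rw [hrestr]
      exact integral_zero_measure _
    have hni : ¬ Integrable (fun y => 1 - Real.exp (-ρ * y)) (νθ.restrict (Set.Ioi 0)) := by
      intro hI
      have hfin2 := (hasFiniteIntegral_iff_ofReal (nn_aux νθ ρ hρ)).mp hI.hasFiniteIntegral
      have hc : 0 < 1 - Real.exp (-ρ * t0) := by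
        have : Real.exp (-ρ * t0) < 1 := Real.exp_lt_one_iff.mpr (by nlinarith)
        linarith
      have hlow : ENNReal.ofReal (1 - Real.exp (-ρ * t0)) * νθ (Set.Ici t0)
          ≤ ∫⁻ y in Set.Ioi (0:ℝ), ENNReal.ofReal (1 - Real.exp (-ρ * y)) ∂νθ := by
        have m0 : ∫⁻ _ in Set.Ici t0, ENNReal.ofReal (1 - Real.exp (-ρ * t0)) ∂νθ
            = ENNReal.ofReal (1 - Real.exp (-ρ * t0)) * νθ (Set.Ici t0) := by
          rw [setLIntegral_const]
        rw [← m0]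
        refine le_trans ?_ (lintegral_mono_set (fun y hy => lt_of_lt_of_le ht0 hy))
        apply lintegral_mono_ae
        filter_upwards [ae_restrict_mem measurableSet_Ici] with y hy
        apply ENNReal.ofReal_le_ofReal
        have : Real.exp (-ρ * y) ≤ Real.exp (-ρ * t0) := Real.exp_le_exp.mpr (by nlinarith [Set.mem_Ici.mp hy])
        linarith
      rw [htop, ENNReal.mul_top (ne_of_gt (ENNReal.ofReal_pos.mpr hc))] at hlow
      exact absurd (eq_top_iff.mpr hlow) hfin2.ne
    rw [integral_undef hni, hRHS, mul_zero]
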